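/- arXiv:2404.09073 — 3 statements merged into one kernel-verified Lean document; each statement's English description precedes it below -/
import Mathlib

section
/- If b_α/b_{g_i α} ≤ 1 for all i and all α ∈ F_n^+, then the associated weighted left creation operators W_1,...,W_n form a row contraction: W_1 W_1* + ⋯ + W_n W_n* ≤ I. Moreover, the completely positive map φ(X) = Σ_i W_i X W_i* satisfies φ^k(I) → 0 in the strong operator topology as k → ∞. -/
open scoped InnerProductSpace
open Filter

noncomputable section

/-- Words in the free semigroup `F_n^+`, encoded as lists over `Fin n`. -/
abbrev Word (n : ℕ) := List (Fin n)

/-- The full Fock space tensored with `K`, realized as `ℓ²`-sequences over words with values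
in `K`; for `K = ℂ` this is the full Fock space `F²(H_n)` with orthonormal basis `{e_α}`. -/
abbrev FockK (n : ℕ) (K : Type*) [NormedAddCommGroup K] [InnerProductSpace ℂ K] :=
  lp (fun _ : Word n => K) 2

/-- The finite set of words of length `p`. -/
def wordsLen (n p : ℕ) : Finset (Word n) :=
  (Finset.univ : Finset (List.Vector (Fin n) p)).image List.Vector.toList

variable {n : ℕ} {E : Type*} [NormedAddCommGroup E] [InnerProductSpace ℂ E] [CompleteSpace E]

/-- For a word `α = g_{i₁} ⋯ g_{i_k}`, the operator `X_α = X_{i₁} ⋯ X_{i_k}`. -/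
def wordOp (X : Fin n → (E →L[ℂ] E)) (α : Word n) : E →L[ℂ] E := (α.map X).prod

/-- Partial sums `∑_{p < N} ∑_{|α| = p} a_α X_α X_α^*` of the defect series
`Δ_{g⁻¹}(X, X^*)` associated with the coefficients `a` of `g⁻¹`. -/
def deltaPartial (a : Word n → ℝ) (X : Fin n → (E →L[ℂ] E)) (N : ℕ) : E →L[ℂ] E :=
  ∑ p ∈ Finset.range N, ∑ α ∈ wordsLen n p,
    (a α : ℂ) • (wordOp X α ∘L (wordOp X α).adjoint)

/-! ### Auxiliary definitions and lemmas -/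

/-- The diagonal coefficient of `φ^[k](1)`. -/
def fockD (b : Word n → ℝ) (k : ℕ) (β : Word n) : ℝ :=
  if k ≤ β.length then b (β.drop k) / b β else 0

lemma fockD_zero (b : Word n → ℝ) (hb : ∀ α, 0 < b α) (β : Word n) :
    fockD b 0 β = 1 := by
  simp [fockD, div_self (hb β).ne']

lemma fockD_nonneg (b : Word n → ℝ) (hb : ∀ α, 0 < b α) (k : ℕ) (β : Word n) :
    0 ≤ fockD b k β := by
  unfold fockD
  split
  · exact div_nonneg (hb _).le (hb _).le
  · exact le_refl 0

lemma ratio_le_one (b : Word n → ℝ) (hb : ∀ α, 0 < b α)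
    (hratio : ∀ (i : Fin n) (α : Word n), b α / b (i :: α) ≤ 1) :
    ∀ (α γ : Word n), b γ / b (α ++ γ) ≤ 1 := by
  intro α
  induction α with
  | nil => intro γ; simp [div_self (hb γ).ne']
  | cons i α ih =>
    intro γ
    have h1 := ih γ
    have h2 := hratio i (α ++ γ)
    have key : b γ / b (i :: (α ++ γ)) =
        (b γ / b (α ++ γ)) * (b (α ++ γ) / b (i :: (α ++ γ))) := by
      rw [div_mul_div_comm, mul_comm (b γ), mul_div_mul_left _ _ (hb (α ++ γ)).ne']
    calc b γ / b (i :: α ++ γ) = (b γ / b (α ++ γ)) * (b (α ++ γ) / b (i :: (α ++ γ))) := key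
    _ ≤ 1 := mul_le_one₀ h1 (div_nonneg (hb _).le (hb _).le) h2

lemma fockD_le_one (b : Word n → ℝ) (hb : ∀ α, 0 < b α)
    (hratio : ∀ (i : Fin n) (α : Word n), b α / b (i :: α) ≤ 1)
    (k : ℕ) (β : Word n) : fockD b k β ≤ 1 := by
  unfold fockD
  split
  · have := ratio_le_one b hb hratio (β.take k) (β.drop k)
    rwa [List.take_append_drop] at this
  · exact zero_le_one

lemma fockD_succ_cons (b : Word n → ℝ) (hb : ∀ α, 0 < b α)
    (k : ℕ) (j : Fin n) (γ : Word n) :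
    fockD b (k + 1) (j :: γ) = (b γ / b (j :: γ)) * fockD b k γ := by
  unfold fockD
  by_cases h : k ≤ γ.length
  · rw [if_pos (by simpa using h), if_pos h]
    simp only [List.drop_succ_cons]
    rw [div_mul_div_comm, mul_comm (b γ), mul_div_mul_right _ _ (hb γ).ne']
  · rw [if_neg (by simpa using h), if_neg h, mul_zero]

lemma fockD_succ_nil (b : Word n → ℝ) (k : ℕ) :
    fockD b (k + 1) ([] : Word n) = 0 := by
  simp [fockD]

lemma mem_wordsLen {n p : ℕ} {β : Word n} : β ∈ wordsLen n p ↔ β.length = p := by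
  constructor
  · intro h
    rcases Finset.mem_image.1 h with ⟨v, _, rfl⟩
    exact v.2
  · intro h
    exact Finset.mem_image.2 ⟨⟨β, h⟩, Finset.mem_univ _, rfl⟩

/-- The finite set of words of length `< k`. -/
def shortWords (n k : ℕ) : Finset (Word n) := (Finset.range k).biUnion (wordsLen n)

lemma mem_shortWords {n k : ℕ} {β : Word n} : β ∈ shortWords n k ↔ β.length < k := by
  simp only [shortWords, Finset.mem_biUnion, Finset.mem_range, mem_wordsLen]
  constructor
  · rintro ⟨p, hp, rfl⟩; exact hp
  · intro h; exact ⟨β.length, h, rfl⟩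

set_option maxHeartbeats 1000000 in
/-- If `b_α / b_{g_i α} ≤ 1` for all `i, α`, then the weighted left creation
operators form a row contraction, `∑ W_i W_i* ≤ I`, and the completely positive map
`φ(X) = ∑ W_i X W_i*` satisfies `φ^k(I) → 0` in the strong operator topology. -/
theorem weighted_creation_row_contraction_pure
    {n : ℕ} (b : Word n → ℝ) (hb : ∀ α, 0 < b α) (hb0 : b ([] : Word n) = 1)
    (hratio : ∀ (i : Fin n) (α : Word n), b α / b (i :: α) ≤ 1)
    (W : Fin n → (FockK n ℂ →L[ℂ] FockK n ℂ))
    (hW : ∀ (i : Fin n) (α : Word n),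
      W i (lp.single 2 α (1 : ℂ)) =
        ((Real.sqrt (b α / b (i :: α)) : ℝ) : ℂ) • lp.single 2 (i :: α) (1 : ℂ)) :
    (1 - ∑ i : Fin n, W i ∘L (W i).adjoint).IsPositive ∧
    ∀ x : FockK n ℂ,
      Tendsto
        (fun k : ℕ =>
          ((fun X : FockK n ℂ →L[ℂ] FockK n ℂ =>
              ∑ i : Fin n, W i ∘L X ∘L (W i).adjoint)^[k] 1) x)
        atTop (nhds 0) := by
  classical
  set φ : (FockK n ℂ →L[ℂ] FockK n ℂ) → (FockK n ℂ →L[ℂ] FockK n ℂ) :=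
    fun X => ∑ i : Fin n, W i ∘L X ∘L (W i).adjoint with hφ
  set c : Fin n → Word n → ℝ := fun i β => Real.sqrt (b β / b (i :: β)) with hc
  have hcnonneg : ∀ i β, 0 ≤ c i β := fun i β => Real.sqrt_nonneg _
  have hc_sq : ∀ i β, c i β * c i β = b β / b (i :: β) := fun i β =>
    Real.mul_self_sqrt (div_nonneg (hb _).le (hb _).le)
  -- component formula for the adjoint
  have happly : ∀ (y : FockK n ℂ) (β : Word n), y β = ⟪lp.single 2 β (1 : ℂ), y⟫_ℂ := by
    intro y β
    rw [lp.inner_single_left]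
    simp [RCLike.inner_apply]
  have hadj : ∀ (i : Fin n) (x : FockK n ℂ) (β : Word n),
      ((W i).adjoint x) β = (c i β : ℂ) * x (i :: β) := by
    intro i x β
    rw [happly, ContinuousLinearMap.adjoint_inner_right, hW, inner_smul_left,
      ← happly]
    simp [hc]
  -- adjoint on basis vectors
  have hadj_single : ∀ (i : Fin n) (β : Word n),
      (W i).adjoint (lp.single 2 (i :: β) (1 : ℂ)) = (c i β : ℂ) • lp.single 2 β (1 : ℂ) := by
    intro i β
    apply lp.ext
    funext γ
    rw [hadj]
    rcases eq_or_ne γ β with rfl | hγ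
    · simp [lp.single_apply_self]
      show (c i γ : ℂ) = (c i γ : ℂ) * (lp.single 2 γ (1 : ℂ) : Word n → ℂ) γ
      rw [lp.single_apply_self, mul_one]
    · rw [lp.single_apply_ne _ _ _ (by simpa using hγ), mul_zero, lp.coeFn_smul,
        Pi.smul_apply, lp.single_apply_ne _ _ _ hγ, smul_zero]
  have hadj_single_zero : ∀ (i : Fin n) (γ : Word n), (∀ β, γ ≠ i :: β) →
      (W i).adjoint (lp.single 2 γ (1 : ℂ)) = 0 := by
    intro i γ hγ
    apply lp.ext
    funext δ
    rw [hadj, lp.single_apply_ne _ _ _ (fun h => hγ δ h.symm), mul_zero]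
    simp
  -- component formula for `W i`
  have hWapp : ∀ (i : Fin n) (x : FockK n ℂ) (γ : Word n),
      (W i x) (i :: γ) = (c i γ : ℂ) * x γ := by
    intro i x γ
    rw [happly, ← ContinuousLinearMap.adjoint_inner_left, hadj_single, inner_smul_left,
      ← happly]
    simp
  have hWapp_zero : ∀ (i : Fin n) (x : FockK n ℂ) (γ : Word n), (∀ β, γ ≠ i :: β) →
      (W i x) γ = 0 := by
    intro i x γ hγ
    rw [happly, ← ContinuousLinearMap.adjoint_inner_left, hadj_single_zero i γ hγ,
      inner_zero_left]
  -- the main diagonal formula for the iterates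
  have hiter : ∀ (k : ℕ) (x : FockK n ℂ) (β : Word n),
      ((φ^[k] 1) x) β = ((fockD b k β : ℝ) : ℂ) * x β := by
    intro k
    induction k with
    | zero =>
      intro x β
      simp [fockD_zero b hb]
    | succ k ih =>
      intro x β
      rw [Function.iterate_succ_apply', hφ]
      have hsum : ((∑ i : Fin n, W i ∘L (φ^[k] 1) ∘L (W i).adjoint) x) β =
          ∑ i : Fin n, (W i ((φ^[k] 1) ((W i).adjoint x))) β := by
        rw [ContinuousLinearMap.sum_apply, lp.coeFn_sum, Finset.sum_apply]
        simp only [ContinuousLinearMap.comp_apply]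
      rw [hsum]
      cases β with
      | nil =>
        rw [Finset.sum_eq_zero fun i _ => hWapp_zero i _ [] (by simp)]
        rw [fockD_succ_nil]
        simp
      | cons j γ =>
        rw [Finset.sum_eq_single j]
        · rw [hWapp, ih, hadj, fockD_succ_cons b hb]
          push_cast [← hc_sq j γ]
          ring
        · intro i _ hij
          refine hWapp_zero i _ (j :: γ) fun β hβ => ?_
          injection hβ with h1 h2
          exact hij h1.symm
        · intro h; exact absurd (Finset.mem_univ j) h
  -- `φ 1 = ∑ Wᵢ Wᵢ*`
  have hphi1 : φ^[1] (1 : FockK n ℂ →L[ℂ] FockK n ℂ) = ∑ i : Fin n, W i ∘L (W i).adjoint := by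
    rw [Function.iterate_one, hφ]
    refine Finset.sum_congr rfl fun i _ => ?_
    ext y
    simp
  constructor
  · -- positivity
    constructor
    · -- selfadjoint
      have h1 : IsSelfAdjoint (∑ i : Fin n, W i ∘L (W i).adjoint) := by
        rw [IsSelfAdjoint, star_sum]
        refine Finset.sum_congr rfl fun i _ => ?_
        rw [ContinuousLinearMap.star_eq_adjoint, ContinuousLinearMap.adjoint_comp,
          ContinuousLinearMap.adjoint_adjoint]
      exact ((IsSelfAdjoint.one _).sub h1).isSymmetric
    · intro x
      rw [ContinuousLinearMap.reApplyInnerSelf]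
      set T : FockK n ℂ →L[ℂ] FockK n ℂ := 1 - ∑ i : Fin n, W i ∘L (W i).adjoint with hT
      have hTx : ∀ β, (T x) β = ((1 - fockD b 1 β : ℝ) : ℂ) * x β := by
        intro β
        have : (T x) β = x β - ((φ^[1] 1) x) β := by
          rw [hT, ← hphi1]
          simp [ContinuousLinearMap.sub_apply, lp.coeFn_sub]
        rw [this, hiter 1 x β]
        push_cast
        ring
      have hs : HasSum (fun β => ⟪(T x) β, x β⟫_ℂ) ⟪T x, x⟫_ℂ := lp.hasSum_inner _ _
      have hs' : HasSum (fun β => RCLike.re ⟪(T x) β, x β⟫_ℂ) (RCLike.re ⟪T x, x⟫_ℂ) :=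
        hs.mapL RCLike.reCLM
      refine hs'.nonneg fun β => ?_
      rw [hTx, RCLike.inner_apply]
      have hz : x β * (starRingEnd ℂ) (((1 - fockD b 1 β : ℝ) : ℂ) * x β) =
          ((((1 - fockD b 1 β) * Complex.normSq (x β) : ℝ)) : ℂ) := by
        rw [map_mul, Complex.conj_ofReal, mul_comm, mul_assoc, ← Complex.normSq_eq_conj_mul_self]
        push_cast
        ring
      rw [hz]
      have h1 : fockD b 1 β ≤ 1 := fockD_le_one b hb hratio 1 β
      have h2 : (0:ℝ) ≤ Complex.normSq (x β) := Complex.normSq_nonneg _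
      have h3 : RCLike.re ((((1 - fockD b 1 β) * Complex.normSq (x β) : ℝ)) : ℂ) =
          (1 - fockD b 1 β) * Complex.normSq (x β) := by
        simp
      rw [h3]
      nlinarith
  · -- strong convergence to 0
    intro x
    have hxsum : HasSum (fun β => ‖x β‖ ^ 2) (‖x‖ ^ 2) := by
      have h0 : HasSum (fun β => ⟪x β, x β⟫_ℂ) ⟪x, x⟫_ℂ := lp.hasSum_inner x x
      have h2 := h0.mapL (RCLike.reCLM (K := ℂ))
      simp only [ContinuousLinearMap.coe_coe] at h2
      simpa only [RCLike.reCLM_apply, inner_self_eq_norm_sq] using h2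
    have hxsummable : Summable fun β => ‖x β‖ ^ 2 := hxsum.summable
    -- ‖φ^[k] 1 x‖ ^ 2 ≤ tail sum
    have hband : ∀ k : ℕ, ‖(φ^[k] 1) x‖ ^ 2 ≤
        ∑' β : { β : Word n // β ∉ shortWords n k }, ‖x β.1‖ ^ 2 := by
      intro k
      have hTk : HasSum (fun β => ‖((φ^[k] 1) x) β‖ ^ 2) (‖(φ^[k] 1) x‖ ^ 2) := by
        have h0 : HasSum (fun β => ⟪((φ^[k] 1) x) β, ((φ^[k] 1) x) β⟫_ℂ)
            ⟪(φ^[k] 1) x, (φ^[k] 1) x⟫_ℂ := lp.hasSum_inner _ _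
        have h2 := h0.mapL (RCLike.reCLM (K := ℂ))
        simp only [ContinuousLinearMap.coe_coe] at h2
        simpa only [RCLike.reCLM_apply, inner_self_eq_norm_sq] using h2
      have hsubty : ∑' β : { β : Word n // β ∉ shortWords n k }, ‖x β.1‖ ^ 2 =
          ∑' β : Word n, Set.indicator {β : Word n | β ∉ shortWords n k}
            (fun β => ‖x β‖ ^ 2) β :=
        tsum_subtype {β : Word n | β ∉ shortWords n k} (fun β => ‖x β‖ ^ 2)
      rw [hsubty, ← hTk.tsum_eq]
      refine Summable.tsum_le_tsum (fun β => ?_) hTk.summable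
        (hxsummable.indicator {β : Word n | β ∉ shortWords n k})
      rw [hiter k x β]
      by_cases hβ : β ∈ shortWords n k
      · have : fockD b k β = 0 := by
          unfold fockD
          rw [if_neg (by simpa using not_le.2 (mem_shortWords.1 hβ))]
        rw [Set.indicator_of_notMem (by simpa using hβ), this]
        simp
      · rw [Set.indicator_of_mem (by simpa using hβ)]
        have hd0 : 0 ≤ fockD b k β := fockD_nonneg b hb k β
        have hd1 : fockD b k β ≤ 1 := fockD_le_one b hb hratio k β
        rw [norm_mul, mul_pow]
        have : ‖((fockD b k β : ℝ) : ℂ)‖ ^ 2 ≤ 1 := by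
          rw [Complex.norm_real, Real.norm_of_nonneg hd0]
          nlinarith
        nlinarith [sq_nonneg ‖x β‖, sq_nonneg ‖((fockD b k β : ℝ) : ℂ)‖]
    -- the tail sums tend to 0
    have hmono : Monotone (fun k => shortWords n k) := by
      intro a b' hab
      exact Finset.biUnion_subset_biUnion_of_subset_left _ (Finset.range_subset_range.2 hab)
    have hmem : ∀ β : Word n, ∃ k, β ∈ shortWords n k :=
      fun β => ⟨β.length + 1, mem_shortWords.2 (Nat.lt_succ_self _)⟩
    have htail : Tendsto
        (fun k : ℕ => ∑' β : { β : Word n // β ∉ shortWords n k }, ‖x β.1‖ ^ 2)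
        atTop (nhds 0) :=
      (tendsto_tsum_compl_atTop_zero (fun β : Word n => ‖x β‖ ^ 2)).comp
        (tendsto_atTop_finset_of_monotone hmono hmem)
    rw [tendsto_zero_iff_norm_tendsto_zero]
    have hsqrt : Tendsto
        (fun k : ℕ => Real.sqrt (∑' β : { β : Word n // β ∉ shortWords n k }, ‖x β.1‖ ^ 2))
        atTop (nhds 0) := by
      have := (Real.continuous_sqrt.tendsto 0).comp htail
      rwa [Real.sqrt_zero] at this
    refine squeeze_zero (fun k => norm_nonneg _) (fun k => ?_) hsqrt
    have h1 := hband k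
    have h2 : ‖(φ^[k] 1) x‖ = Real.sqrt (‖(φ^[k] 1) x‖ ^ 2) :=
      (Real.sqrt_sq (norm_nonneg _)).symm
    rw [h2]
    exact Real.sqrt_le_sqrt h1

end
end

section
/- Let W = (W_1,...,W_n) be weighted left creation operators associated with an admissible g, acting on F^2(H_n), and let K be a Hilbert space. A subspace M ⊆ F^2(H_n) ⊗ K is reducing for each W_i ⊗ I_K if and only if M = F^2(H_n) ⊗ E for some closed subspace E ⊆ K. -/
open scoped InnerProductSpace
open Filter

noncomputable section

variable {n : ℕ} {E : Type*} [NormedAddCommGroup E] [InnerProductSpace ℂ E] [CompleteSpace E]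

section Aux

variable {K : Type*} [NormedAddCommGroup K] [InnerProductSpace ℂ K] [CompleteSpace K]

set_option linter.unusedSectionVars false

/-- `lp.single` is additive. -/
lemma lp_single_add'' {ι : Type*} [DecidableEq ι] (α : ι) (k k' : K) :
    lp.single 2 α (k + k') = (lp.single 2 α k : lp (fun _ : ι => K) 2) + lp.single 2 α k' := by
  refine lp.ext (funext fun j => ?_)
  by_cases hj : j = α
  · subst hj; simp [lp.single_apply_self, lp.coeFn_add]
  · simp [lp.single_apply_ne _ _ _ hj, lp.coeFn_add]

/-- `lp.single` as a continuous linear map. -/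
def singleCLM {ι : Type*} [DecidableEq ι] (α : ι) : K →L[ℂ] lp (fun _ : ι => K) 2 :=
  LinearMap.mkContinuous
    { toFun := fun k => lp.single 2 α k
      map_add' := fun k k' => lp_single_add'' α k k'
      map_smul' := fun c k => by simpa using (lp.single_smul 2 α k c) }
    1 (fun k => by
      have := lp.norm_single (p := 2) (E := fun _ : ι => K) (by norm_num) α k
      simp only [LinearMap.coe_mk, AddHom.coe_mk, this, one_mul, le_refl])

@[simp] lemma singleCLM_apply {ι : Type*} [DecidableEq ι] (α : ι) (k : K) :
    singleCLM α k = (lp.single 2 α k : lp (fun _ : ι => K) 2) := rfl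

/-- Coordinate evaluation as a continuous linear map. -/
def coordCLM {ι : Type*} (α : ι) : lp (fun _ : ι => K) 2 →L[ℂ] K :=
  LinearMap.mkContinuous
    { toFun := fun f => f α
      map_add' := fun f g => by simp [lp.coeFn_add]
      map_smul' := fun c f => by simp [lp.coeFn_smul] }
    1 (fun f => by rw [one_mul]; exact lp.norm_apply_le_norm (p := 2) (by norm_num) f α)

@[simp] lemma coordCLM_apply {ι : Type*} (α : ι) (f : lp (fun _ : ι => K) 2) :
    coordCLM α f = f α := rfl

end Aux

/-- For the universal model `W` of an admissible `g` (so that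
`Δ_{g⁻¹}(W,W*) ⊗ I_K` converges SOT to the vacuum projection tensor `I_K`), a closed subspace
`M ⊆ F²(H_n) ⊗ K` is reducing for all `W_i ⊗ I_K` iff `M = F²(H_n) ⊗ E` for some closed
`E ⊆ K`. -/
theorem reducing_subspaces_of_universal_model
    {n : ℕ} {K : Type*} [NormedAddCommGroup K] [InnerProductSpace ℂ K] [CompleteSpace K]
    (b a : Word n → ℝ) (hb : ∀ α, 0 < b α) (hb0 : b ([] : Word n) = 1)
    (ha0 : a ([] : Word n) = 1)
    (hbd : ∃ C : ℝ, ∀ (i : Fin n) (α : Word n), b α / b (i :: α) ≤ C)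
    (W : Fin n → (FockK n K →L[ℂ] FockK n K))
    (hW : ∀ (i : Fin n) (α : Word n) (k : K),
      W i (lp.single 2 α k) =
        ((Real.sqrt (b α / b (i :: α)) : ℝ) : ℂ) • lp.single 2 (i :: α) k)
    (hDelta : ∀ x : FockK n K,
      Tendsto (fun N : ℕ => deltaPartial a W N x) atTop
        (nhds (lp.single 2 ([] : Word n) ((x : ∀ _ : Word n, K) []))))
    (M : Submodule ℂ (FockK n K)) (hM : IsClosed (M : Set (FockK n K))) :
    (∀ i : Fin n, (∀ x ∈ M, W i x ∈ M) ∧ (∀ x ∈ M, (W i).adjoint x ∈ M)) ↔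
      ∃ E : Submodule ℂ K, IsClosed (E : Set K) ∧
        ∀ f : FockK n K, f ∈ M ↔ ∀ α : Word n, (f : ∀ _ : Word n, K) α ∈ E := by
  classical
  have hc : ∀ (i : Fin n) (α : Word n), (0:ℝ) < Real.sqrt (b α / b (i :: α)) :=
    fun i α => Real.sqrt_pos.mpr (div_pos (hb α) (hb _))
  have hwnil : wordOp W ([] : Word n) = 1 := rfl
  have hwcons : ∀ (i : Fin n) (α : Word n), wordOp W (i :: α) = (W i) ∘L wordOp W α := by
    intro i α
    simp [wordOp, List.prod_cons, ContinuousLinearMap.mul_def]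
  have hadjcoord : ∀ (i : Fin n) (x : FockK n K) (α : Word n),
      ((W i).adjoint x : ∀ _ : Word n, K) α
        = ((Real.sqrt (b α / b (i :: α)) : ℝ) : ℂ) • (x : ∀ _ : Word n, K) (i :: α) := by
    intro i x α
    refine ext_inner_right ℂ fun k => ?_
    rw [inner_smul_left, ← lp.inner_single_right (𝕜 := ℂ),
      ContinuousLinearMap.adjoint_inner_left, hW, inner_smul_right, lp.inner_single_right]
    simp [Complex.conj_ofReal]
  have hadjword : ∀ (α : Word n) (x : FockK n K), ∃ c : ℝ, 0 < c ∧
      ((wordOp W α).adjoint x : ∀ _ : Word n, K) ([] : Word n)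
        = (c : ℂ) • (x : ∀ _ : Word n, K) α := by
    intro α
    induction α with
    | nil =>
      intro x
      refine ⟨1, one_pos, ?_⟩
      simp [hwnil, ContinuousLinearMap.one_def, ContinuousLinearMap.adjoint_id]
    | cons i β ih =>
      intro x
      obtain ⟨c, hcpos, hcx⟩ := ih ((W i).adjoint x)
      refine ⟨c * Real.sqrt (b β / b (i :: β)), mul_pos hcpos (hc i β), ?_⟩
      rw [hwcons, ContinuousLinearMap.adjoint_comp, ContinuousLinearMap.comp_apply, hcx,
        hadjcoord]
      push_cast
      rw [smul_smul]
  have hwordsingle : ∀ (α : Word n) (k : K), ∃ c : ℝ, 0 < c ∧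
      wordOp W α (lp.single 2 ([] : Word n) k) = (c : ℂ) • lp.single 2 α k := by
    intro α k
    induction α with
    | nil => exact ⟨1, one_pos, by simp [hwnil]⟩
    | cons i β ih =>
      obtain ⟨c, hcpos, hcx⟩ := ih
      refine ⟨Real.sqrt (b β / b (i :: β)) * c, mul_pos (hc i β) hcpos, ?_⟩
      rw [hwcons, ContinuousLinearMap.comp_apply, hcx, map_smul, hW]
      push_cast
      rw [smul_smul, mul_comm]
  constructor
  · intro hred
    have hMword : ∀ (α : Word n), ∀ x ∈ M, wordOp W α x ∈ M := by
      intro α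
      induction α with
      | nil => intro x hx; simpa [hwnil] using hx
      | cons i β ih =>
        intro x hx
        rw [hwcons, ContinuousLinearMap.comp_apply]
        exact (hred i).1 _ (ih x hx)
    have hMadj : ∀ (α : Word n), ∀ x ∈ M, (wordOp W α).adjoint x ∈ M := by
      intro α
      induction α with
      | nil =>
        intro x hx
        simpa [hwnil, ContinuousLinearMap.one_def, ContinuousLinearMap.adjoint_id] using hx
      | cons i β ih =>
        intro x hx
        rw [hwcons, ContinuousLinearMap.adjoint_comp, ContinuousLinearMap.comp_apply]
        exact ih _ ((hred i).2 x hx)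
    have hMdelta : ∀ (N : ℕ), ∀ x ∈ M, deltaPartial a W N x ∈ M := by
      intro N x hx
      simp only [deltaPartial, ContinuousLinearMap.sum_apply, ContinuousLinearMap.smul_apply,
        ContinuousLinearMap.comp_apply]
      refine Submodule.sum_mem M fun p _ => Submodule.sum_mem M fun α _ => ?_
      exact M.smul_mem _ (hMword α _ (hMadj α x hx))
    have hvac : ∀ x ∈ M, lp.single 2 ([] : Word n) ((x : ∀ _ : Word n, K) []) ∈ M := by
      intro x hx
      exact hM.mem_of_tendsto (hDelta x)
        (Filter.Eventually.of_forall fun N => hMdelta N x hx)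
    refine ⟨M.comap ((singleCLM ([] : Word n) : K →L[ℂ] FockK n K) : K →ₗ[ℂ] FockK n K),
      ?_, ?_⟩
    · exact IsClosed.preimage (singleCLM ([] : Word n)).continuous hM
    · intro f
      constructor
      · intro hf α
        rw [Submodule.mem_comap]
        obtain ⟨c, hcpos, hcf⟩ := hadjword α f
        have h1 : lp.single 2 ([] : Word n) ((c : ℂ) • (f : ∀ _ : Word n, K) α) ∈ M := by
          rw [← hcf]; exact hvac _ (hMadj α f hf)
        rw [lp.single_smul] at h1
        have h2 := M.smul_mem ((c : ℂ)⁻¹) h1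
        rw [smul_smul, inv_mul_cancel₀ (by exact_mod_cast hcpos.ne'), one_smul] at h2
        exact h2
      · intro hf
        have hsing : ∀ α : Word n, lp.single 2 α ((f : ∀ _ : Word n, K) α) ∈ M := by
          intro α
          obtain ⟨c, hcpos, hcs⟩ := hwordsingle α ((f : ∀ _ : Word n, K) α)
          have hmem : lp.single 2 ([] : Word n) ((f : ∀ _ : Word n, K) α) ∈ M :=
            Submodule.mem_comap.mp (hf α)
          have h1 : (c : ℂ) • lp.single 2 α ((f : ∀ _ : Word n, K) α) ∈ M := by
            rw [← hcs]; exact hMword α _ hmem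
          have h2 := M.smul_mem ((c : ℂ)⁻¹) h1
          rw [smul_smul, inv_mul_cancel₀ (by exact_mod_cast hcpos.ne'), one_smul] at h2
          exact h2
        have hs : HasSum (fun α : Word n => lp.single 2 α ((f : ∀ _ : Word n, K) α)) f :=
          lp.hasSum_single ENNReal.ofNat_ne_top f
        exact hM.mem_of_tendsto hs
          (Filter.Eventually.of_forall fun s => Submodule.sum_mem M fun α _ => hsing α)
  · rintro ⟨E, hEc, hEmem⟩ i
    constructor
    · intro x hx
      rw [hEmem]
      intro α
      have hxE : ∀ β, (x : ∀ _ : Word n, K) β ∈ E := (hEmem x).mp hx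
      have hsum : HasSum (fun β : Word n => lp.single 2 β ((x : ∀ _ : Word n, K) β)) x :=
        lp.hasSum_single ENNReal.ofNat_ne_top x
      have hsum2 : HasSum
          (fun β : Word n =>
            ((coordCLM α).comp (W i)) (lp.single 2 β ((x : ∀ _ : Word n, K) β)))
          (((coordCLM α).comp (W i)) x) := hsum.mapL _
      have hterm : ∀ β : Word n,
          ((coordCLM α).comp (W i)) (lp.single 2 β ((x : ∀ _ : Word n, K) β)) ∈ E := by
        intro β
        rw [ContinuousLinearMap.comp_apply, hW, map_smul, coordCLM_apply]
        by_cases hab : α = i :: β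
        · subst hab
          rw [lp.single_apply_self]
          exact E.smul_mem _ (hxE β)
        · rw [lp.single_apply_ne _ _ _ hab]
          simpa using E.zero_mem
      have hlim : ((coordCLM α).comp (W i)) x ∈ E :=
        hEc.mem_of_tendsto hsum2
          (Filter.Eventually.of_forall fun s => Submodule.sum_mem E fun β _ => hterm β)
      simpa using hlim
    · intro x hx
      rw [hEmem]
      intro α
      rw [hadjcoord]
      exact E.smul_mem _ ((hEmem x).mp hx (i :: α))
end
end

section
/- Let H ⊆ F^2(H_n) ⊗ G be co-invariant under each W_i ⊗ I_G (W the universal model of an admissible g). The following are equivalent: (i) the closed span of (W_α ⊗ I_G)H over α ∈ F_n^+ equals F^2(H_n) ⊗ G; (ii) there is no proper closed subspace N of G with H ⊆ F^2(H_n) ⊗ N; (iii) closure((P_{C1} ⊗ I_G)H) = G (identifying C1 ⊗ G with G); (iv) H^⊥ ∩ G = {0} (with G identified with 1 ⊗ G). -/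
open scoped InnerProductSpace
open Filter

noncomputable section

variable {n : ℕ} {E : Type*} [NormedAddCommGroup E] [InnerProductSpace ℂ E] [CompleteSpace E]

/-! ### Auxiliary lemmas -/

section Aux

set_option linter.unusedSectionVars false

lemma wordOp_nil (X : Fin n → (E →L[ℂ] E)) : wordOp X ([] : Word n) = 1 := rfl

lemma wordOp_cons (X : Fin n → (E →L[ℂ] E)) (i : Fin n) (α : Word n) :
    wordOp X (i :: α) = X i ∘L wordOp X α := by
  rw [wordOp, List.map_cons, List.prod_cons, ContinuousLinearMap.mul_def, wordOp]

lemma wordOp_append (X : Fin n → (E →L[ℂ] E)) (α β : Word n) :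
    wordOp X (α ++ β) = wordOp X α ∘L wordOp X β := by
  rw [wordOp, List.map_append, List.prod_append, ContinuousLinearMap.mul_def, wordOp, wordOp]

variable {G : Type*} [NormedAddCommGroup G] [InnerProductSpace ℂ G] [CompleteSpace G]

/-- Evaluation at a word, as a linear map on the Fock space. -/
def evalW (α : Word n) : FockK n G →ₗ[ℂ] G where
  toFun f := f α
  map_add' f g := by simp [lp.coeFn_add]
  map_smul' c f := by simp [lp.coeFn_smul]

lemma fock_continuous_eval (α : Word n) :
    Continuous fun f : FockK n G => (f : ∀ _ : Word n, G) α := by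
  refine (LipschitzWith.of_dist_le_mul (K := 1) fun f g => ?_).continuous
  rw [dist_eq_norm, dist_eq_norm, NNReal.coe_one, one_mul]
  have h := lp.norm_apply_le_norm (by norm_num : (2 : ENNReal) ≠ 0) (f - g) α
  simpa [lp.coeFn_sub] using h

lemma single_add' (α : Word n) (k l : G) :
    (lp.single 2 α (k + l) : FockK n G) = lp.single 2 α k + lp.single 2 α l := by
  classical
  apply lp.ext
  rw [lp.coeFn_add]
  funext j
  by_cases h : j = α
  · subst h; simp [lp.single_apply_self]
  · simp [lp.single_apply_ne _ _ _ h]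

lemma single_sub' (α : Word n) (k l : G) :
    (lp.single 2 α (k - l) : FockK n G) = lp.single 2 α k - lp.single 2 α l := by
  rw [sub_eq_add_neg, single_add', lp.single_neg, ← sub_eq_add_neg]

lemma fock_continuous_single (α : Word n) :
    Continuous fun k : G => (lp.single 2 α k : FockK n G) := by
  refine (LipschitzWith.of_dist_le_mul (K := 1) fun k l => ?_).continuous
  rw [dist_eq_norm, dist_eq_norm, NNReal.coe_one, one_mul, ← single_sub']
  rw [lp.norm_single (E := fun _ : Word n => G) (p := 2) (by norm_num) α (k - l)]

lemma wordOp_single (b : Word n → ℝ) (hb : ∀ α, 0 < b α)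
    (W : Fin n → (FockK n G →L[ℂ] FockK n G))
    (hW : ∀ (i : Fin n) (α : Word n) (k : G), W i (lp.single 2 α k) =
      ((Real.sqrt (b α / b (i :: α)) : ℝ) : ℂ) • lp.single 2 (i :: α) k)
    (α β : Word n) (k : G) :
    wordOp W α (lp.single 2 β k) =
      ((Real.sqrt (b β / b (α ++ β)) : ℝ) : ℂ) • lp.single 2 (α ++ β) k := by
  induction α with
  | nil =>
      simp [wordOp_nil, div_self (hb β).ne']
  | cons i α ih =>
      rw [wordOp_cons, ContinuousLinearMap.comp_apply, ih, map_smul, hW, smul_smul,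
        ← Complex.ofReal_mul, ← Real.sqrt_mul (div_pos (hb β) (hb _)).le]
      have h1 : b β / b (α ++ β) * (b (α ++ β) / b (i :: (α ++ β))) = b β / b (i :: (α ++ β)) := by
        rw [div_mul_div_comm, mul_comm (b β) (b (α ++ β)), mul_div_mul_left _ _ (hb _).ne']
      rw [h1]
      rfl

lemma wordOp_adjoint_mem (W : Fin n → (FockK n G →L[ℂ] FockK n G))
    (H : Submodule ℂ (FockK n G))
    (hco : ∀ i : Fin n, ∀ x ∈ H, (W i).adjoint x ∈ H) :
    ∀ (α : Word n), ∀ h ∈ H, (wordOp W α).adjoint h ∈ H := by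
  intro α
  induction α with
  | nil =>
      intro h hh
      simpa [wordOp_nil, ContinuousLinearMap.one_def, ContinuousLinearMap.adjoint_id] using hh
  | cons i α ih =>
      intro h hh
      rw [wordOp_cons, ContinuousLinearMap.adjoint_comp, ContinuousLinearMap.comp_apply]
      exact ih _ (hco i h hh)

lemma wordOp_adjoint_apply_nil (b : Word n → ℝ) (hb : ∀ α, 0 < b α)
    (W : Fin n → (FockK n G →L[ℂ] FockK n G))
    (hW : ∀ (i : Fin n) (α : Word n) (k : G), W i (lp.single 2 α k) =
      ((Real.sqrt (b α / b (i :: α)) : ℝ) : ℂ) • lp.single 2 (i :: α) k)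
    (α : Word n) (h : FockK n G) :
    ((wordOp W α).adjoint h : ∀ _ : Word n, G) [] =
      ((Real.sqrt (b ([] : Word n) / b α) : ℝ) : ℂ) • (h : ∀ _ : Word n, G) α := by
  classical
  apply ext_inner_left ℂ
  intro k
  have e1 : ⟪(lp.single 2 ([] : Word n) k : FockK n G),
        (ContinuousLinearMap.adjoint (wordOp W α)) h⟫_ℂ
      = ⟪k, ((ContinuousLinearMap.adjoint (wordOp W α)) h : ∀ _ : Word n, G) []⟫_ℂ :=
    lp.inner_single_left _ _ _
  have e2 : ⟪(lp.single 2 α k : FockK n G), h⟫_ℂ = ⟪k, (h : ∀ _ : Word n, G) α⟫_ℂ :=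
    lp.inner_single_left _ _ _
  calc ⟪k, ((ContinuousLinearMap.adjoint (wordOp W α)) h : ∀ _ : Word n, G) []⟫_ℂ
      = ⟪(lp.single 2 ([] : Word n) k : FockK n G),
          (ContinuousLinearMap.adjoint (wordOp W α)) h⟫_ℂ := e1.symm
    _ = ⟪wordOp W α (lp.single 2 ([] : Word n) k), h⟫_ℂ :=
        ContinuousLinearMap.adjoint_inner_right _ _ _
    _ = ⟪((Real.sqrt (b ([] : Word n) / b α) : ℝ) : ℂ) • (lp.single 2 α k : FockK n G), h⟫_ℂ := by
        rw [wordOp_single b hb W hW, List.append_nil]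
    _ = ((Real.sqrt (b ([] : Word n) / b α) : ℝ) : ℂ) * ⟪(lp.single 2 α k : FockK n G), h⟫_ℂ := by
        rw [inner_smul_left, Complex.conj_ofReal]
    _ = ((Real.sqrt (b ([] : Word n) / b α) : ℝ) : ℂ) * ⟪k, (h : ∀ _ : Word n, G) α⟫_ℂ := by
        rw [e2]
    _ = ⟪k, ((Real.sqrt (b ([] : Word n) / b α) : ℝ) : ℂ) • (h : ∀ _ : Word n, G) α⟫_ℂ :=
        (inner_smul_right _ _ _).symm

end Aux

/-- For a co-invariant subspace `H ⊆ F²(H_n) ⊗ G` of the universal model of an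
admissible `g`, the following are equivalent: (i) the closed span of `(W_α ⊗ I_G)H` is the whole
space; (ii) no proper closed subspace `N ⊆ G` satisfies `H ⊆ F²(H_n) ⊗ N`; (iii) the vacuum
components of `H` are dense in `G`; (iv) `H^⊥ ∩ G = {0}` (with `G` identified with `1 ⊗ G`). -/
theorem minimality_equivalences
    {n : ℕ} {G : Type*} [NormedAddCommGroup G] [InnerProductSpace ℂ G] [CompleteSpace G]
    (b a : Word n → ℝ) (hb : ∀ α, 0 < b α) (hb0 : b ([] : Word n) = 1)
    (ha0 : a ([] : Word n) = 1)
    (hbd : ∃ C : ℝ, ∀ (i : Fin n) (α : Word n), b α / b (i :: α) ≤ C)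
    (W : Fin n → (FockK n G →L[ℂ] FockK n G))
    (hW : ∀ (i : Fin n) (α : Word n) (k : G),
      W i (lp.single 2 α k) =
        ((Real.sqrt (b α / b (i :: α)) : ℝ) : ℂ) • lp.single 2 (i :: α) k)
    (hDelta : ∀ x : FockK n G,
      Tendsto (fun N : ℕ => deltaPartial a W N x) atTop
        (nhds (lp.single 2 ([] : Word n) ((x : ∀ _ : Word n, G) []))))
    (H : Submodule ℂ (FockK n G)) (hHcl : IsClosed (H : Set (FockK n G)))
    (hco : ∀ i : Fin n, ∀ x ∈ H, (W i).adjoint x ∈ H) :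
    (closure (↑(Submodule.span ℂ
        (⋃ α : Word n, wordOp W α '' (H : Set (FockK n G)))) : Set (FockK n G)) = Set.univ
      ↔ ∀ N : Submodule ℂ G, IsClosed (N : Set G) →
          (∀ f ∈ H, ∀ α : Word n, (f : ∀ _ : Word n, G) α ∈ N) → N = ⊤) ∧
    (closure (↑(Submodule.span ℂ
        (⋃ α : Word n, wordOp W α '' (H : Set (FockK n G)))) : Set (FockK n G)) = Set.univ
      ↔ closure ((fun f : FockK n G => (f : ∀ _ : Word n, G) []) '' (H : Set (FockK n G)))
          = Set.univ) ∧
    (closure ((fun f : FockK n G => (f : ∀ _ : Word n, G) []) '' (H : Set (FockK n G)))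
        = Set.univ
      ↔ ∀ k : G, (∀ h ∈ H, ⟪(lp.single 2 ([] : Word n) k : FockK n G), h⟫_ℂ = 0) → k = 0) := by
  classical
  set S0 : Set (FockK n G) := ⋃ α : Word n, wordOp W α '' (H : Set (FockK n G)) with hS0
  set Sp : Submodule ℂ (FockK n G) := Submodule.span ℂ S0 with hSp
  set V : Submodule ℂ G := Submodule.map (evalW ([] : Word n)) H with hV
  have hVset : ((fun f : FockK n G => (f : ∀ _ : Word n, G) []) '' (H : Set (FockK n G)))
      = (V : Set G) := rfl
  -- scalars
  have hcpos : ∀ α : Word n, 0 < Real.sqrt (b ([] : Word n) / b α) := fun α =>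
    Real.sqrt_pos.mpr (div_pos (hb _) (hb _))
  have hcne : ∀ α : Word n, ((Real.sqrt (b ([] : Word n) / b α) : ℝ) : ℂ) ≠ 0 := fun α =>
    Complex.ofReal_ne_zero.mpr (hcpos α).ne'
  -- all components of elements of `H` lie in `V`
  have hcomp : ∀ h ∈ H, ∀ α : Word n, (h : ∀ _ : Word n, G) α ∈ V := by
    intro h hh α
    have h1 : (wordOp W α).adjoint h ∈ H := wordOp_adjoint_mem W H hco α h hh
    have h2 := wordOp_adjoint_apply_nil b hb W hW α h
    have h3 : (h : ∀ _ : Word n, G) α =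
        (((Real.sqrt (b ([] : Word n) / b α) : ℝ) : ℂ))⁻¹ •
          ((wordOp W α).adjoint h : ∀ _ : Word n, G) [] := by
      rw [h2, smul_smul, inv_mul_cancel₀ (hcne α), one_smul]
    rw [h3]
    exact V.smul_mem _ ⟨_, h1, rfl⟩
  -- membership of generators in the span
  have hmemS0 : ∀ (α : Word n), ∀ h ∈ H, wordOp W α h ∈ Sp := fun α h hh =>
    Submodule.subset_span (Set.mem_iUnion.2 ⟨α, ⟨h, hh, rfl⟩⟩)
  -- (iii) → (i)
  have key31 : closure ((fun f : FockK n G => (f : ∀ _ : Word n, G) []) ''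
        (H : Set (FockK n G))) = Set.univ →
      closure (Sp : Set (FockK n G)) = Set.univ := by
    intro hiii
    set T : Submodule ℂ (FockK n G) := Sp.topologicalClosure with hT
    have hTcoe : (T : Set (FockK n G)) = closure (Sp : Set (FockK n G)) :=
      Submodule.topologicalClosure_coe Sp
    have hTclosed : IsClosed (T : Set (FockK n G)) := Submodule.isClosed_topologicalClosure Sp
    have hWSp : ∀ (α : Word n), ∀ x ∈ Sp, wordOp W α x ∈ Sp := by
      intro α x hx
      refine Submodule.span_induction ?_ ?_ ?_ ?_ hx
      · intro y hy
        simp only [hS0, Set.mem_iUnion, Set.mem_image] at hy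
        obtain ⟨β, h, hh, rfl⟩ := hy
        have h4 : wordOp W α (wordOp W β h) = wordOp W (α ++ β) h := by
          rw [wordOp_append]; rfl
        rw [h4]
        exact hmemS0 _ _ hh
      · simpa using Sp.zero_mem
      · intro y z _ _ hy hz
        rw [map_add]; exact Sp.add_mem hy hz
      · intro c y _ hy
        rw [map_smul]; exact Sp.smul_mem _ hy
    have hWT : ∀ (α : Word n), ∀ x ∈ (T : Set (FockK n G)),
        wordOp W α x ∈ (T : Set (FockK n G)) := by
      intro α
      have hmt : Set.MapsTo (wordOp W α) (Sp : Set (FockK n G)) (Sp : Set (FockK n G)) :=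
        fun x hx => hWSp α x hx
      have := hmt.closure (wordOp W α).continuous
      intro x hx
      rw [hTcoe] at hx ⊢
      exact this hx
    -- vacuum singles from `H` are in `T`
    have hsingle0 : ∀ h ∈ H,
        (lp.single 2 ([] : Word n) ((h : ∀ _ : Word n, G) []) : FockK n G)
          ∈ (T : Set (FockK n G)) := by
      intro h hh
      have hmem : ∀ N : ℕ, deltaPartial a W N h ∈ Sp := by
        intro N
        simp only [deltaPartial, ContinuousLinearMap.sum_apply, ContinuousLinearMap.smul_apply,
          ContinuousLinearMap.coe_comp', Function.comp_apply]
        refine Submodule.sum_mem _ fun p _ => Submodule.sum_mem _ fun α _ => ?_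
        exact Sp.smul_mem _ (hmemS0 α _ (wordOp_adjoint_mem W H hco α h hh))
      exact hTclosed.mem_of_tendsto (hDelta h)
        (Eventually.of_forall fun N => Sp.le_topologicalClosure (hmem N))
    have hsingleα : ∀ (α : Word n), ∀ h ∈ H,
        (lp.single 2 α ((h : ∀ _ : Word n, G) []) : FockK n G) ∈ (T : Set (FockK n G)) := by
      intro α h hh
      have h1 := hWT α _ (hsingle0 h hh)
      rw [wordOp_single b hb W hW, List.append_nil] at h1
      have h2 := T.smul_mem (((Real.sqrt (b ([] : Word n) / b α) : ℝ) : ℂ))⁻¹ h1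
      rwa [smul_smul, inv_mul_cancel₀ (hcne α), one_smul] at h2
    have hsingleAll : ∀ (α : Word n) (k : G),
        (lp.single 2 α k : FockK n G) ∈ (T : Set (FockK n G)) := by
      intro α k
      have hmt : Set.MapsTo (fun k : G => (lp.single 2 α k : FockK n G))
          ((fun f : FockK n G => (f : ∀ _ : Word n, G) []) '' (H : Set (FockK n G)))
          (T : Set (FockK n G)) := by
        rintro _ ⟨h, hh, rfl⟩
        exact hsingleα α h hh
      have h5 := hmt.closure (fock_continuous_single α)
      rw [hiii, hTclosed.closure_eq] at h5
      exact h5 (Set.mem_univ k)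
    have hall : ∀ f : FockK n G, f ∈ (T : Set (FockK n G)) := by
      intro f
      have hsum := lp.hasSum_single (E := fun _ : Word n => G) (p := 2)
        (by norm_num : (2 : ENNReal) ≠ ⊤) f
      refine hTclosed.mem_of_tendsto hsum (Eventually.of_forall fun s => ?_)
      exact Submodule.sum_mem T fun α _ => hsingleAll α _
    rw [← hTcoe]
    exact Set.eq_univ_of_forall hall
  -- (i) → (ii)
  have key12 : closure (Sp : Set (FockK n G)) = Set.univ →
      ∀ N : Submodule ℂ G, IsClosed (N : Set G) →
        (∀ f ∈ H, ∀ α : Word n, (f : ∀ _ : Word n, G) α ∈ N) → N = ⊤ := by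
    intro hi N hNcl hNcomp
    set TN : Submodule ℂ (FockK n G) := ⨅ α : Word n, N.comap (evalW α) with hTN
    have hmemTN : ∀ f : FockK n G, f ∈ TN ↔ ∀ α : Word n, (f : ∀ _ : Word n, G) α ∈ N := by
      intro f
      simp only [hTN, Submodule.mem_iInf, Submodule.mem_comap]
      rfl
    have hTNclosed : IsClosed (TN : Set (FockK n G)) := by
      have h6 : (TN : Set (FockK n G)) =
          ⋂ α : Word n, (fun f : FockK n G => (f : ∀ _ : Word n, G) α) ⁻¹' (N : Set G) := by
        ext f
        simp only [SetLike.mem_coe, hmemTN f, Set.mem_iInter, Set.mem_preimage]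
      rw [h6]
      exact isClosed_iInter fun α => hNcl.preimage (fock_continuous_eval α)
    have hsingleTN : ∀ (α : Word n) (k : G), k ∈ N →
        (lp.single 2 α k : FockK n G) ∈ TN := by
      intro α k hk
      rw [hmemTN]
      intro β
      by_cases h : β = α
      · subst h; rw [lp.single_apply_self]; exact hk
      · rw [lp.single_apply_ne _ _ _ h]; exact N.zero_mem
    have hWTN : ∀ (i : Fin n), ∀ f ∈ TN, W i f ∈ TN := by
      intro i f hf
      have hsum := lp.hasSum_single (E := fun _ : Word n => G) (p := 2)
        (by norm_num : (2 : ENNReal) ≠ ⊤) f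
      have h2 : Tendsto (fun s : Finset (Word n) =>
          W i (∑ α ∈ s, (lp.single 2 α ((f : ∀ _ : Word n, G) α) : FockK n G))) atTop
          (nhds (W i f)) := ((W i).continuous.tendsto f).comp hsum
      refine hTNclosed.mem_of_tendsto h2 (Eventually.of_forall fun s => ?_)
      rw [map_sum]
      refine Submodule.sum_mem _ fun α _ => ?_
      rw [hW]
      exact TN.smul_mem _ (hsingleTN _ _ ((hmemTN f).1 hf α))
    have hwordTN : ∀ (α : Word n), ∀ f ∈ TN, wordOp W α f ∈ TN := by
      intro α
      induction α with
      | nil => intro f hf; simpa [wordOp_nil] using hf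
      | cons i α ih =>
          intro f hf
          rw [wordOp_cons, ContinuousLinearMap.comp_apply]
          exact hWTN i _ (ih f hf)
    have hS0TN : S0 ⊆ (TN : Set (FockK n G)) := by
      intro x hx
      simp only [hS0, Set.mem_iUnion, Set.mem_image] at hx
      obtain ⟨α, h, hh, rfl⟩ := hx
      exact hwordTN α h ((hmemTN h).2 (hNcomp h hh))
    have hSpTN : (Sp : Set (FockK n G)) ⊆ (TN : Set (FockK n G)) := Submodule.span_le.2 hS0TN
    have hclTN : closure (Sp : Set (FockK n G)) ⊆ (TN : Set (FockK n G)) :=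
      closure_minimal hSpTN hTNclosed
    rw [hi] at hclTN
    rw [Submodule.eq_top_iff']
    intro k
    have h7 : (lp.single 2 ([] : Word n) k : FockK n G) ∈ TN := hclTN (Set.mem_univ _)
    have h8 := (hmemTN _).1 h7 ([] : Word n)
    rwa [lp.single_apply_self] at h8
  -- (ii) → (iii)
  have key23 : (∀ N : Submodule ℂ G, IsClosed (N : Set G) →
        (∀ f ∈ H, ∀ α : Word n, (f : ∀ _ : Word n, G) α ∈ N) → N = ⊤) →
      closure ((fun f : FockK n G => (f : ∀ _ : Word n, G) []) ''
        (H : Set (FockK n G))) = Set.univ := by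
    intro hii
    have h1 : V.topologicalClosure = ⊤ :=
      hii _ (Submodule.isClosed_topologicalClosure V)
        (fun f hf α => V.le_topologicalClosure (hcomp f hf α))
    have h2 := congrArg (fun K : Submodule ℂ G => (K : Set G)) h1
    simp only [Submodule.topologicalClosure_coe, Submodule.top_coe] at h2
    rw [hVset]
    exact h2
  -- (iii) ↔ (iv)
  have key34 : closure ((fun f : FockK n G => (f : ∀ _ : Word n, G) []) ''
        (H : Set (FockK n G))) = Set.univ ↔
      ∀ k : G, (∀ h ∈ H, ⟪(lp.single 2 ([] : Word n) k : FockK n G), h⟫_ℂ = 0) → k = 0 := by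
    rw [hVset]
    constructor
    · intro h3 k hk
      have hbot : Vᗮ = ⊥ := by
        rw [← Submodule.topologicalClosure_eq_top_iff]
        apply SetLike.ext'
        rw [Submodule.topologicalClosure_coe, h3, Submodule.top_coe]
      have hkmem : k ∈ Vᗮ := by
        rw [Submodule.mem_orthogonal']
        rintro v ⟨h, hh, rfl⟩
        have h9 := hk h hh
        rw [lp.inner_single_left] at h9
        exact h9
      rw [hbot, Submodule.mem_bot] at hkmem
      exact hkmem
    · intro h4
      have hbot : Vᗮ = ⊥ := by
        rw [Submodule.eq_bot_iff]
        intro k hk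
        apply h4
        intro h hh
        rw [lp.inner_single_left]
        exact (Submodule.mem_orthogonal' _ _).1 hk _ ⟨h, hh, rfl⟩
      have h5 := Submodule.topologicalClosure_eq_top_iff.2 hbot
      have h6 := congrArg (fun K : Submodule ℂ G => (K : Set G)) h5
      simpa only [Submodule.topologicalClosure_coe, Submodule.top_coe] using h6
  refine ⟨⟨key12, fun hii => key31 (key23 hii)⟩,
    ⟨fun hi => key23 (key12 hi), key31⟩, key34⟩
end
end
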